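/- For every natural number n, the map ψ restricts to a bijection from the set of area sequences of size n onto the set of area sequences of size n. -/

import Mathlib

/-- The `i`-th letter of the word `w` (`1`-indexed, as in the paper);
defaults to `0` out of range. -/
def get1 (w : List ℕ) (i : ℕ) : ℕ := w.getD (i - 1) 0

/-- `w` is the area sequence of a Dyck path: the first letter is `0` and each
letter exceeds the previous one by at most one. -/
def IsAreaSeq (w : List ℕ) : Prop :=
  (w ≠ [] → get1 w 1 = 0) ∧ ∀ i, 1 ≤ i → i < w.length → get1 w (i + 1) ≤ get1 w i + 1

/-- Insertion at position `i` (for `0 ≤ i ≤ n`): `ins w 0` prepends a `0`, and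
for `1 ≤ i ≤ n`, `ins w i` inserts the letter `w_i + 1` just after position `i`. -/
def ins (w : List ℕ) (i : ℕ) : List ℕ :=
  w.take i ++ (if i = 0 then 0 else get1 w i + 1) :: w.drop i

/-- The area statistic: the sum of the letters. -/
def area (w : List ℕ) : ℕ := w.sum

/-- The dinv statistic: `dinv w = Σ_i d_i` where `d_i` is the number of `j > i`
with `w_j = w_i` or `w_j = w_i - 1`. -/
def dinv (w : List ℕ) : ℕ :=
  ∑ i ∈ Finset.Icc 1 w.length,
    ((Finset.Ioc i w.length).filter
      (fun j => get1 w j = get1 w i ∨ get1 w j + 1 = get1 w i)).card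

/-- The maximal value of a word (`0` for the empty word). -/
def maxVal (w : List ℕ) : ℕ := w.foldr max 0

/-- Positions of the letters of maximal value `m`. -/
def Maxb (w : List ℕ) : Finset ℕ :=
  (Finset.Icc 1 w.length).filter (fun i => get1 w i = maxVal w)

/-- Positions `i` with `w_i = m - 1` such that all letters after position `i`
are `< m`. -/
def Maxa (w : List ℕ) : Finset ℕ :=
  (Finset.Icc 1 w.length).filter (fun i =>
    get1 w i + 1 = maxVal w ∧ ∀ j ∈ Finset.Ioc i w.length, get1 w j < maxVal w)

/-- The position of the leftmost letter equal to the maximal value `m` in the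
rightmost block of consecutive letters equal to `m`. -/
def i0 (w : List ℕ) : ℕ :=
  ((Finset.Icc 1 w.length).filter (fun i =>
    get1 w i = maxVal w ∧ (i = 1 ∨ get1 w (i - 1) ≠ maxVal w))).sup id

/-- The admissible insertion positions of `w`, listed in admissible order:
the elements of `Maxb w` in decreasing order, then the elements of `Maxa w`
in decreasing order, then `i0 w - 1`.  The empty word has the single
admissible insertion position `0`. -/
def admissible (w : List ℕ) : List ℕ :=
  if w = [] then [0]
  else ((Maxb w).sort (· ≤ ·)).reverse ++ ((Maxa w).sort (· ≤ ·)).reverse ++ [i0 w - 1]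

/-- Auxiliary version of the map `ψ`, reading the reversed word. -/
def psiRev : List ℕ → List ℕ
  | [] => []
  | a :: u => ins (psiRev u) ((admissible (psiRev u)).getD a 0)

/-- The map `ψ`: `ψ(ε) = ε` and `ψ(u a) = ins_{c_a}(ψ(u))` where
`c_0, c_1, …, c_k` are the admissible insertion positions of `ψ(u)` in
admissible order. -/
def psi (w : List ℕ) : List ℕ := psiRev w.reverse

lemma length_ins (w : List ℕ) (c : ℕ) (hc : c ≤ w.length) :
    (ins w c).length = w.length + 1 := by
  simp [ins]; omega

lemma get1_ins_le (w : List ℕ) {c j : ℕ} (hc : c ≤ w.length) (hj1 : 1 ≤ j)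
    (hjc : j ≤ c) : get1 (ins w c) j = get1 w j := by
  unfold ins get1
  rw [List.getD_append _ _ _ _ (by rw [List.length_take]; omega)]
  rw [List.getD_eq_getElem?_getD, List.getD_eq_getElem?_getD,
    List.getElem?_take_of_lt (by omega)]

lemma get1_ins_self (w : List ℕ) {c : ℕ} (hc : c ≤ w.length) :
    get1 (ins w c) (c + 1) = if c = 0 then 0 else get1 w c + 1 := by
  unfold ins get1
  rw [List.getD_append_right _ _ _ _ (by rw [List.length_take]; omega)]
  rw [List.length_take, Nat.min_eq_left hc]
  simp

lemma get1_ins_ge (w : List ℕ) {c j : ℕ} (hc : c ≤ w.length) (hj : c + 2 ≤ j) :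
    get1 (ins w c) j = get1 w (j - 1) := by
  unfold ins get1
  rw [List.getD_append_right _ _ _ _ (by rw [List.length_take]; omega)]
  rw [List.length_take, Nat.min_eq_left hc]
  have : j - 1 - c = (j - 2 - c) + 1 := by omega
  rw [this]
  rw [List.getD_cons_succ]
  rw [List.getD_eq_getElem?_getD, List.getD_eq_getElem?_getD, List.getElem?_drop]
  congr 2
  omega

lemma get1_eq_getElem (w : List ℕ) {i : ℕ} (h1 : 1 ≤ i) (h2 : i ≤ w.length) :
    get1 w i = w[i-1]'(by omega) := List.getD_eq_getElem _ _ (by omega)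

lemma get1_eq_zero (w : List ℕ) {i : ℕ} (h : w.length < i) : get1 w i = 0 :=
  List.getD_eq_default _ _ (by omega)

lemma mem_iff_get1 (w : List ℕ) (x : ℕ) :
    x ∈ w ↔ ∃ i, (1 ≤ i ∧ i ≤ w.length) ∧ get1 w i = x := by
  rw [List.mem_iff_getElem]
  constructor
  · rintro ⟨k, hk, rfl⟩
    refine ⟨k+1, ⟨by omega, by omega⟩, ?_⟩
    rw [get1_eq_getElem _ (by omega) (by omega)]
    simp
  · rintro ⟨i, ⟨h1, h2⟩, rfl⟩
    exact ⟨i-1, by omega, by rw [get1_eq_getElem _ h1 h2]⟩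

lemma le_maxVal {w : List ℕ} {x : ℕ} (h : x ∈ w) : x ≤ maxVal w := by
  induction w with
  | nil => simp at h
  | cons a t ih =>
    rcases List.mem_cons.1 h with rfl | h
    · exact le_max_left _ _
    · exact le_trans (ih h) (le_max_right _ _)

lemma maxVal_le {w : List ℕ} {b : ℕ} (h : ∀ x ∈ w, x ≤ b) : maxVal w ≤ b := by
  induction w with
  | nil => exact Nat.zero_le b
  | cons a t ih =>
    exact max_le (h a List.mem_cons_self) (ih (fun x hx => h x (List.mem_cons_of_mem a hx)))

lemma maxVal_mem (w : List ℕ) : maxVal w = 0 ∨ maxVal w ∈ w := by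
  induction w with
  | nil => left; rfl
  | cons a t ih =>
    have hm3 : maxVal (a :: t) = max a (maxVal t) := rfl
    rcases le_or_gt (maxVal t) a with h | h
    · right; rw [hm3, max_eq_left h]; exact List.mem_cons_self
    · rw [hm3, max_eq_right h.le]
      rcases ih with h0 | hm
      · left; exact h0
      · right; exact List.mem_cons_of_mem a hm

lemma get1_le_maxVal (w : List ℕ) (i : ℕ) : get1 w i ≤ maxVal w := by
  rcases le_or_gt i w.length with h | h
  · rcases Nat.eq_zero_or_pos i with rfl | h1
    · rcases w with _ | ⟨a, t⟩
      · exact le_refl 0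
      · exact le_maxVal (by rw [mem_iff_get1]; exact ⟨1, ⟨le_refl _, by simp⟩, rfl⟩)
    · exact le_maxVal ((mem_iff_get1 w _).2 ⟨i, ⟨h1, h⟩, rfl⟩)
  · rw [get1_eq_zero _ h]; exact Nat.zero_le _

lemma mem_ins {w : List ℕ} {c : ℕ} (hc : c ≤ w.length) (x : ℕ) :
    x ∈ ins w c ↔ x = (if c = 0 then 0 else get1 w c + 1) ∨ x ∈ w := by
  unfold ins
  constructor
  · intro h
    rcases List.mem_append.1 h with h | h
    · exact Or.inr (List.mem_of_mem_take h)
    · rcases List.mem_cons.1 h with h | h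
      · exact Or.inl h
      · exact Or.inr (List.mem_of_mem_drop h)
  · intro h
    rcases h with rfl | h
    · exact List.mem_append.2 (Or.inr List.mem_cons_self)
    · rcases List.mem_append.1 ((w.take_append_drop c).symm ▸ h) with h | h
      · exact List.mem_append.2 (Or.inl h)
      · exact List.mem_append.2 (Or.inr (List.mem_cons_of_mem _ h))

lemma maxVal_ins {w : List ℕ} {c : ℕ} (hc : c ≤ w.length) :
    maxVal (ins w c) = max (if c = 0 then 0 else get1 w c + 1) (maxVal w) := by
  apply le_antisymm
  · apply maxVal_le
    intro x hx
    rcases (mem_ins hc x).1 hx with rfl | h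
    · exact le_max_left _ _
    · exact le_trans (le_maxVal h) (le_max_right _ _)
  · apply max_le
    · exact le_maxVal ((mem_ins hc _).2 (Or.inl rfl))
    · rcases maxVal_mem w with h0 | hm
      · rw [h0]; exact Nat.zero_le _
      · exact le_maxVal ((mem_ins hc _).2 (Or.inr hm))

lemma isAreaSeq_ins {w : List ℕ} {c : ℕ} (hw : IsAreaSeq w) (hc : c ≤ w.length) :
    IsAreaSeq (ins w c) := by
  obtain ⟨hw1, hw2⟩ := hw
  have hlen := length_ins w c hc
  constructor
  · intro _
    rcases Nat.eq_zero_or_pos c with rfl | hcpos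
    · simpa using get1_ins_self w hc
    · rw [get1_ins_le w hc (le_refl 1) hcpos]
      apply hw1
      intro h
      rw [h] at hc
      simp at hc
      omega
  · intro i hi1 hilen
    rw [hlen] at hilen
    rcases lt_or_ge (i+1) (c+1) with hlt | hge
    · rw [get1_ins_le w hc (by omega) (by omega), get1_ins_le w hc hi1 (by omega)]
      exact hw2 i hi1 (by omega)
    rcases eq_or_lt_of_le hge with heq | hgt
    · have hic : i = c := by omega
      subst hic
      rw [get1_ins_self w hc, get1_ins_le w hc hi1 (le_refl _)]
      simp only [if_neg (by omega : ¬ i = 0)]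
      exact le_refl _
    rcases eq_or_lt_of_le (by omega : c + 2 ≤ i + 1) with heq | hgt2
    · have hic : i = c + 1 := by omega
      subst hic
      rw [get1_ins_ge w hc (by omega), get1_ins_self w hc]
      simp only [Nat.add_sub_cancel]
      rcases Nat.eq_zero_or_pos c with rfl | hcpos
      · simp only [if_pos rfl]
        rcases Nat.eq_zero_or_pos w.length with h0 | h0
        · rw [get1_eq_zero w (by omega)]; omega
        · rw [hw1 (by intro h; rw [h] at h0; simp at h0)]; omega
      · simp only [if_neg (by omega : ¬ c = 0)]
        rcases lt_or_ge c w.length with h | h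
        · have := hw2 c (by omega) h
          omega
        · rw [get1_eq_zero w (by omega)]; omega
    · rw [get1_ins_ge w hc (by omega), get1_ins_ge w hc (by omega)]
      simp only [Nat.add_sub_cancel]
      have := hw2 (i-1) (by omega) (by omega)
      have hi : i - 1 + 1 = i := by omega
      rw [hi] at this
      exact this

lemma mem_Maxb {w : List ℕ} {i : ℕ} :
    i ∈ Maxb w ↔ (1 ≤ i ∧ i ≤ w.length) ∧ get1 w i = maxVal w := by
  simp [Maxb]

lemma mem_Maxa {w : List ℕ} {i : ℕ} :
    i ∈ Maxa w ↔ (1 ≤ i ∧ i ≤ w.length) ∧ get1 w i + 1 = maxVal w ∧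
      ∀ j, i < j → j ≤ w.length → get1 w j < maxVal w := by
  simp [Maxa]

lemma Maxb_nonempty {w : List ℕ} (hw : IsAreaSeq w) (hne : w ≠ []) :
    (Maxb w).Nonempty := by
  rcases maxVal_mem w with h0 | hm
  · refine ⟨1, mem_Maxb.2 ⟨⟨le_refl _, ?_⟩, ?_⟩⟩
    · cases w with
      | nil => exact absurd rfl hne
      | cons a t => simp
    · rw [h0]; exact hw.1 hne
  · rw [mem_iff_get1] at hm
    obtain ⟨i, ⟨h1, h2⟩, h3⟩ := hm
    exact ⟨i, mem_Maxb.2 ⟨⟨h1, h2⟩, h3⟩⟩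

/-- The filter set defining `i0`. -/

def S0 (w : List ℕ) : Finset ℕ :=
  (Finset.Icc 1 w.length).filter (fun i =>
    get1 w i = maxVal w ∧ (i = 1 ∨ get1 w (i - 1) ≠ maxVal w))

lemma mem_S0 {w : List ℕ} {i : ℕ} :
    i ∈ S0 w ↔ (1 ≤ i ∧ i ≤ w.length) ∧ get1 w i = maxVal w ∧
      (i = 1 ∨ get1 w (i - 1) ≠ maxVal w) := by
  simp [S0]

lemma i0_eq_sup (w : List ℕ) : i0 w = (S0 w).sup id := rfl

lemma S0_nonempty {w : List ℕ} (h : (Maxb w).Nonempty) : (S0 w).Nonempty := by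
  obtain ⟨i, hi⟩ := h
  have hmin := (Maxb w).min'_mem ⟨i, hi⟩
  set j := (Maxb w).min' ⟨i, hi⟩ with hj
  rw [mem_Maxb] at hmin
  refine ⟨j, mem_S0.2 ⟨hmin.1, hmin.2, ?_⟩⟩
  rcases Nat.eq_or_lt_of_le hmin.1.1 with h1 | h1
  · exact Or.inl h1.symm
  · right
    intro hcontra
    have : j - 1 ∈ Maxb w := mem_Maxb.2 ⟨⟨by omega, by omega⟩, hcontra⟩
    have := (Maxb w).min'_le _ this
    omega

lemma i0_mem_S0' {w : List ℕ} (h : (S0 w).Nonempty) : i0 w ∈ S0 w := by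
  obtain ⟨x, hx⟩ := h
  rw [i0_eq_sup]
  have : (S0 w).sup id = (S0 w).max' ⟨x, hx⟩ := by
    exact le_antisymm (Finset.sup_le fun y hy => Finset.le_max' _ y hy) (Finset.le_sup (f := id) ((S0 w).max'_mem _))
  rw [this]
  exact (S0 w).max'_mem _

lemma le_i0 {w : List ℕ} {j : ℕ} (h : j ∈ S0 w) : j ≤ i0 w :=
  Finset.le_sup (f := id) h

lemma i0_mem_S0 {w : List ℕ} (h : (Maxb w).Nonempty) : i0 w ∈ S0 w :=
  i0_mem_S0' (S0_nonempty h)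

lemma i0_eq {w : List ℕ} {p : ℕ} (h1 : p ∈ S0 w) (h2 : ∀ j ∈ S0 w, j ≤ p) :
    i0 w = p :=
  le_antisymm (h2 _ (i0_mem_S0' ⟨p, h1⟩)) (le_i0 h1)

section Cases

variable {v : List ℕ} {c : ℕ}

lemma caseB (hv : IsAreaSeq v) (hc : c ∈ Maxb v) :
    maxVal (ins v c) = maxVal v + 1 ∧
    Maxb (ins v c) = {c + 1} ∧
    Maxa (ins v c) = ((Maxb v).filter (fun i => c < i)).image (· + 1) ∧
    i0 (ins v c) = c + 1 := by
  obtain ⟨⟨hc1, hc2⟩, hgc⟩ := mem_Maxb.1 hc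
  set n := v.length with hn
  set m := maxVal v with hm
  have hlen : (ins v c).length = n + 1 := length_ins v c hc2
  have hself : get1 (ins v c) (c + 1) = m + 1 := by
    rw [get1_ins_self v hc2, if_neg (by omega), hgc]
  have hmax : maxVal (ins v c) = m + 1 := by
    rw [maxVal_ins hc2, if_neg (by omega), hgc]
    omega
  have hlo : ∀ j, 1 ≤ j → j ≤ c → get1 (ins v c) j = get1 v j :=
    fun j h1 h2 => get1_ins_le v hc2 h1 h2
  have hhi : ∀ j, c + 2 ≤ j → get1 (ins v c) j = get1 v (j - 1) :=
    fun j h => get1_ins_ge v hc2 h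
  have hMb : Maxb (ins v c) = {c + 1} := by
    ext j
    rw [mem_Maxb, Finset.mem_singleton, hlen, hmax]
    constructor
    · rintro ⟨⟨h1, h2⟩, h3⟩
      by_contra hne
      rcases lt_or_ge j (c+1) with h | h
      · rw [hlo j h1 (by omega)] at h3
        have := get1_le_maxVal v j
        omega
      · rw [hhi j (by omega)] at h3
        have := get1_le_maxVal v (j-1)
        omega
    · rintro rfl
      exact ⟨⟨by omega, by omega⟩, hself⟩
  have hMa : Maxa (ins v c) = ((Maxb v).filter (fun i => c < i)).image (· + 1) := by
    ext j
    rw [mem_Maxa, Finset.mem_image, hlen, hmax]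
    constructor
    · rintro ⟨⟨h1, h2⟩, h3, h4⟩
      have hj : c + 2 ≤ j := by
        rcases lt_or_ge j (c+1) with h | h
        · exfalso
          have := h4 (c+1) (by omega) (by omega)
          omega
        · rcases eq_or_lt_of_le h with h' | h'
          · exfalso; rw [← h', hself] at h3; omega
          · omega
      refine ⟨j - 1, Finset.mem_filter.2 ⟨mem_Maxb.2 ⟨⟨by omega, by omega⟩, ?_⟩, by omega⟩, by omega⟩
      rw [← hhi j hj]; omega
    · rintro ⟨i, hi, rfl⟩
      obtain ⟨hib, hci⟩ := Finset.mem_filter.1 hi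
      obtain ⟨⟨hi1, hi2⟩, hgi⟩ := mem_Maxb.1 hib
      refine ⟨⟨by omega, by omega⟩, ?_, ?_⟩
      · rw [hhi (i+1) (by omega)]
        simp only [Nat.add_sub_cancel]
        omega
      · intro k hk1 hk2
        rw [hhi k (by omega)]
        have := get1_le_maxVal v (k-1)
        omega
  have hi0 : i0 (ins v c) = c + 1 := by
    apply i0_eq
    · rw [mem_S0, hlen, hmax]
      refine ⟨⟨by omega, by omega⟩, hself, ?_⟩
      rcases Nat.eq_zero_or_pos c with rfl | hcpos
      · exact Or.inl rfl
      · right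
        simp only [Nat.add_sub_cancel]
        rw [hlo c (by omega) (le_refl _)]
        have := get1_le_maxVal v c
        omega
    · intro j hj
      obtain ⟨⟨h1, h2⟩, h3, _⟩ := mem_S0.1 hj
      rw [hlen] at h2
      rw [hmax] at h3
      by_contra hgt
      rw [hhi j (by omega)] at h3
      have := get1_le_maxVal v (j-1)
      omega
  exact ⟨hmax, hMb, hMa, hi0⟩

lemma caseA (hc : c ∈ Maxa v) :
    maxVal (ins v c) = maxVal v ∧
    (c + 1 ∉ Maxb v ∧ Maxb (ins v c) = insert (c + 1) (Maxb v)) ∧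
    Maxa (ins v c) = ((Maxa v).filter (fun i => c < i)).image (· + 1) ∧
    i0 (ins v c) = c + 1 := by
  obtain ⟨⟨hc1, hc2⟩, hgc, hsuf⟩ := mem_Maxa.1 hc
  set n := v.length with hn
  set m := maxVal v with hm
  have hlen : (ins v c).length = n + 1 := length_ins v c hc2
  have hself : get1 (ins v c) (c + 1) = m := by
    rw [get1_ins_self v hc2, if_neg (by omega)]
    omega
  have hmax : maxVal (ins v c) = m := by
    rw [maxVal_ins hc2, if_neg (by omega)]
    omega
  have hlo : ∀ j, 1 ≤ j → j ≤ c → get1 (ins v c) j = get1 v j :=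
    fun j h1 h2 => get1_ins_le v hc2 h1 h2
  have hhi : ∀ j, c + 2 ≤ j → get1 (ins v c) j = get1 v (j - 1) :=
    fun j h => get1_ins_ge v hc2 h
  have hnotmem : c + 1 ∉ Maxb v := by
    intro h
    obtain ⟨⟨h1, h2⟩, h3⟩ := mem_Maxb.1 h
    have := hsuf (c+1) (by omega) h2
    omega
  have hMb : Maxb (ins v c) = insert (c + 1) (Maxb v) := by
    ext j
    rw [mem_Maxb, Finset.mem_insert, hlen, hmax]
    constructor
    · rintro ⟨⟨h1, h2⟩, h3⟩
      rcases lt_or_ge j (c+1) with h | h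
      · right
        rw [hlo j h1 (by omega)] at h3
        exact mem_Maxb.2 ⟨⟨h1, by omega⟩, h3⟩
      · rcases eq_or_lt_of_le h with h' | h'
        · exact Or.inl h'.symm
        · exfalso
          rw [hhi j (by omega)] at h3
          have := hsuf (j-1) (by omega) (by omega)
          omega
    · rintro (rfl | h)
      · exact ⟨⟨by omega, by omega⟩, hself⟩
      · obtain ⟨⟨h1, h2⟩, h3⟩ := mem_Maxb.1 h
        have hjc : j ≤ c := by
          by_contra hgt
          have := hsuf j (by omega) h2
          omega
        exact ⟨⟨h1, by omega⟩, by rw [hlo j h1 hjc]; exact h3⟩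
  have hMa : Maxa (ins v c) = ((Maxa v).filter (fun i => c < i)).image (· + 1) := by
    ext j
    rw [mem_Maxa, Finset.mem_image, hlen, hmax]
    constructor
    · rintro ⟨⟨h1, h2⟩, h3, h4⟩
      have hj : c + 2 ≤ j := by
        rcases lt_or_ge j (c+1) with h | h
        · exfalso
          have := h4 (c+1) (by omega) (by omega)
          omega
        · rcases eq_or_lt_of_le h with h' | h'
          · exfalso; rw [← h', hself] at h3; omega
          · omega
      refine ⟨j - 1, Finset.mem_filter.2 ⟨mem_Maxa.2 ⟨⟨by omega, by omega⟩, ?_, ?_⟩, by omega⟩, by omega⟩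
      · rw [← hhi j hj]; omega
      · intro k hk1 hk2
        have := h4 (k+1) (by omega) (by omega)
        rw [hhi (k+1) (by omega)] at this
        simpa using this
    · rintro ⟨i, hi, rfl⟩
      obtain ⟨hia, hci⟩ := Finset.mem_filter.1 hi
      obtain ⟨⟨hi1, hi2⟩, hgi, hsi⟩ := mem_Maxa.1 hia
      refine ⟨⟨by omega, by omega⟩, ?_, ?_⟩
      · rw [hhi (i+1) (by omega)]
        simpa using hgi
      · intro k hk1 hk2
        rw [hhi k (by omega)]
        exact hsi (k-1) (by omega) (by omega)
  have hi0 : i0 (ins v c) = c + 1 := by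
    apply i0_eq
    · rw [mem_S0, hlen, hmax]
      refine ⟨⟨by omega, by omega⟩, hself, ?_⟩
      right
      simp only [Nat.add_sub_cancel]
      rw [hlo c (by omega) (le_refl _)]
      omega
    · intro j hj
      obtain ⟨⟨h1, h2⟩, h3, _⟩ := mem_S0.1 hj
      rw [hlen] at h2
      rw [hmax] at h3
      by_contra hgt
      rw [hhi j (by omega)] at h3
      have := hsuf (j-1) (by omega) (by omega)
      omega
  exact ⟨hmax, ⟨hnotmem, hMb⟩, hMa, hi0⟩

lemma caseZ (hv : IsAreaSeq v) (hne : v ≠ []) (hc : c = i0 v - 1) :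
    maxVal (ins v c) = maxVal v ∧
    (Maxb (ins v c)).card = (Maxb v).card + 1 ∧
    (Maxa (ins v c)).card = (Maxa v).card ∧
    i0 (ins v c) = c + 1 ∧ c ≤ v.length := by
  set n := v.length with hn
  set m := maxVal v with hm
  have hz := i0_mem_S0 (Maxb_nonempty hv hne)
  set z := i0 v with hzd
  obtain ⟨⟨hz1, hz2⟩, hgz, hz3⟩ := mem_S0.1 hz
  rcases eq_or_lt_of_le hz1 with hz1' | hz1'
  · -- i0 v = 1, hence m = 0 and v is all zeros
    have hm0 : m = 0 := by rw [hm, ← hgz, ← hz1']; exact hv.1 hne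
    have hc0 : c = 0 := by omega
    subst hc0
    have hall : ∀ j, get1 v j = 0 := by
      intro j
      have := get1_le_maxVal v j
      omega
    have hc2 : (0:ℕ) ≤ n := Nat.zero_le n
    have hlen : (ins v 0).length = n + 1 := length_ins v 0 hc2
    have hall'' : ∀ j, get1 (ins v 0) j = 0 := by
      intro j
      rcases Nat.lt_or_ge j 1 with h | h
      · have h0 : j = 0 := by omega
        subst h0
        have h1 := get1_ins_self v hc2
        unfold get1 at h1 ⊢
        simpa using h1
      rcases Nat.lt_or_ge j 2 with h' | h'
      · have h1 : j = 1 := by omega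
        subst h1
        simpa using get1_ins_self v hc2
      · rw [get1_ins_ge v hc2 (by omega)]
        exact hall _
    have hmax : maxVal (ins v 0) = 0 := by
      rw [maxVal_ins hc2, if_pos rfl]
      omega
    have hMbv : Maxb v = Finset.Icc 1 n := by
      ext j
      rw [mem_Maxb, Finset.mem_Icc]
      constructor
      · rintro ⟨⟨h1, h2⟩, _⟩; exact ⟨h1, h2⟩
      · rintro ⟨h1, h2⟩; exact ⟨⟨h1, h2⟩, by rw [hall]; omega⟩
    have hMbv'' : Maxb (ins v 0) = Finset.Icc 1 (n+1) := by
      ext j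
      rw [mem_Maxb, Finset.mem_Icc, hlen, hmax]
      constructor
      · rintro ⟨⟨h1, h2⟩, _⟩; exact ⟨h1, h2⟩
      · rintro ⟨h1, h2⟩; exact ⟨⟨h1, h2⟩, hall'' j⟩
    have hMav : Maxa v = ∅ := by
      rw [Finset.eq_empty_iff_forall_notMem]
      intro j hj
      obtain ⟨_, hg, _⟩ := mem_Maxa.1 hj
      omega
    have hMav'' : Maxa (ins v 0) = ∅ := by
      rw [Finset.eq_empty_iff_forall_notMem]
      intro j hj
      obtain ⟨_, hg, _⟩ := mem_Maxa.1 hj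
      rw [hmax, hall''] at hg
      omega
    refine ⟨by omega, ?_, by rw [hMav, hMav''], ?_, hc2⟩
    · rw [hMbv, hMbv'', Nat.card_Icc, Nat.card_Icc]
      omega
    · apply i0_eq
      · rw [mem_S0, hlen, hmax]
        exact ⟨⟨le_refl _, by omega⟩, hall'' 1, Or.inl rfl⟩
      · intro j hj
        obtain ⟨⟨h1, h2⟩, _, h3⟩ := mem_S0.1 hj
        rcases h3 with h3 | h3
        · omega
        · exfalso
          rw [hmax, hall''] at h3
          exact h3 rfl
  · -- i0 v ≥ 2
    have hc1 : 1 ≤ c := by omega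
    have hzc : z = c + 1 := by omega
    have hc2 : c ≤ n := by omega
    have hgcne : get1 v c ≠ m := by
      rcases hz3 with h | h
      · omega
      · rw [hzc] at h
        simpa using h
    have hstep : get1 v (c+1) ≤ get1 v c + 1 := hv.2 c hc1 (by omega)
    have hgc : get1 v c + 1 = m := by
      have h1 := get1_le_maxVal v c
      rw [hzc] at hgz
      omega
    have hm1 : 1 ≤ m := by omega
    have hlen : (ins v c).length = n + 1 := length_ins v c hc2
    have hself : get1 (ins v c) (c + 1) = m := by
      rw [get1_ins_self v hc2, if_neg (by omega)]
      omega
    have hmax : maxVal (ins v c) = m := by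
      rw [maxVal_ins hc2, if_neg (by omega)]
      omega
    have hlo : ∀ j, 1 ≤ j → j ≤ c → get1 (ins v c) j = get1 v j :=
      fun j h1 h2 => get1_ins_le v hc2 h1 h2
    have hhi : ∀ j, c + 2 ≤ j → get1 (ins v c) j = get1 v (j - 1) :=
      fun j h => get1_ins_ge v hc2 h
    have hσinj : Function.Injective (fun i => if i ≤ c then i else i + 1) := by
      intro a b
      simp only
      split_ifs <;> omega
    have hMb : Maxb (ins v c) = insert (c + 1) ((Maxb v).image (fun i => if i ≤ c then i else i + 1)) := by
      ext j
      rw [mem_Maxb, Finset.mem_insert, Finset.mem_image, hlen, hmax]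
      constructor
      · rintro ⟨⟨h1, h2⟩, h3⟩
        rcases lt_or_ge j (c+1) with h | h
        · right
          refine ⟨j, mem_Maxb.2 ⟨⟨h1, by omega⟩, by rw [← hlo j h1 (by omega)]; exact h3⟩, ?_⟩
          show (if j ≤ c then j else j + 1) = j
          rw [if_pos (by omega)]
        · rcases eq_or_lt_of_le h with h' | h'
          · exact Or.inl h'.symm
          · right
            refine ⟨j - 1, mem_Maxb.2 ⟨⟨by omega, by omega⟩, by rw [← hhi j (by omega)]; exact h3⟩, ?_⟩
            show (if j - 1 ≤ c then j - 1 else j - 1 + 1) = j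
            rw [if_neg (by omega)]
            omega
      · rintro (rfl | ⟨i, hi, rfl⟩)
        · exact ⟨⟨by omega, by omega⟩, hself⟩
        · obtain ⟨⟨h1, h2⟩, h3⟩ := mem_Maxb.1 hi
          by_cases hic : i ≤ c
          · rw [if_pos hic]
            exact ⟨⟨h1, by omega⟩, by rw [hlo i h1 hic]; exact h3⟩
          · rw [if_neg hic]
            refine ⟨⟨by omega, by omega⟩, ?_⟩
            rw [hhi (i+1) (by omega)]
            have he : i + 1 - 1 = i := by omega
            rw [he]
            exact h3
    have hcnotmem : c + 1 ∉ (Maxb v).image (fun i => if i ≤ c then i else i + 1) := by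
      rw [Finset.mem_image]
      rintro ⟨i, hi, hieq⟩
      have hieq' : (if i ≤ c then i else i + 1) = c + 1 := hieq
      split_ifs at hieq' <;> omega
    have hMa : Maxa (ins v c) = (Maxa v).image (· + 1) := by
      ext j
      rw [mem_Maxa, Finset.mem_image, hlen, hmax]
      constructor
      · rintro ⟨⟨h1, h2⟩, h3, h4⟩
        have hj : c + 2 ≤ j := by
          rcases lt_or_ge j (c+1) with h | h
          · exfalso
            have := h4 (c+1) (by omega) (by omega)
            omega
          · rcases eq_or_lt_of_le h with h' | h'
            · exfalso; rw [← h', hself] at h3; omega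
            · omega
        refine ⟨j - 1, mem_Maxa.2 ⟨⟨by omega, by omega⟩, ?_, ?_⟩, by omega⟩
        · rw [← hhi j hj]; omega
        · intro k hk1 hk2
          have := h4 (k+1) (by omega) (by omega)
          rw [hhi (k+1) (by omega)] at this
          simpa using this
      · rintro ⟨i, hi, rfl⟩
        obtain ⟨⟨hi1, hi2⟩, hgi, hsi⟩ := mem_Maxa.1 hi
        have hiz : z < i := by
          rcases lt_or_ge z i with h | h
          · exact h
          · exfalso
            rcases eq_or_lt_of_le h with h' | h'
            · rw [← h'] at hgz; omega
            · have := hsi z h' hz2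
              omega
        refine ⟨⟨by omega, by omega⟩, ?_, ?_⟩
        · rw [hhi (i+1) (by omega)]
          have he : i + 1 - 1 = i := by omega
          rw [he]
          exact hgi
        · intro k hk1 hk2
          rw [hhi k (by omega)]
          exact hsi (k-1) (by omega) (by omega)
    have hi0'' : i0 (ins v c) = c + 1 := by
      apply i0_eq
      · rw [mem_S0, hlen, hmax]
        refine ⟨⟨by omega, by omega⟩, hself, Or.inr ?_⟩
        simp only [Nat.add_sub_cancel]
        rw [hlo c hc1 (le_refl _)]
        exact hgcne
      · intro j hj
        obtain ⟨⟨h1, h2⟩, h3, h4⟩ := mem_S0.1 hj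
        rw [hlen] at h2
        rw [hmax] at h3
        by_contra hgt
        push_neg at hgt
        rcases h4 with h4 | h4
        · omega
        · rw [hmax] at h4
          rcases eq_or_lt_of_le (show c + 2 ≤ j by omega) with h' | h'
          · apply h4
            have hj1 : j - 1 = c + 1 := by omega
            rw [hj1]
            exact hself
          · rw [hhi j (by omega)] at h3
            rw [hhi (j-1) (by omega)] at h4
            have hmem : j - 1 ∈ S0 v := by
              rw [mem_S0]
              refine ⟨⟨by omega, by omega⟩, by rw [← hm]; exact h3, Or.inr ?_⟩
              rw [← hm]
              exact h4
            have := le_i0 hmem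
            omega
    refine ⟨hmax, ?_, ?_, hi0'', hc2⟩
    · rw [hMb, Finset.card_insert_of_notMem hcnotmem, Finset.card_image_of_injective _ hσinj]
    · rw [hMa, Finset.card_image_of_injective _ (add_left_injective 1)]

end Cases

lemma desc_count : ∀ (L : List ℕ), L.Pairwise (· > ·) → ∀ a (h : a < L.length),
    (L.filter (fun x => decide (L.get ⟨a, h⟩ < x))).length = a := by
  intro L
  induction L with
  | nil => intro _ a h; simp at h
  | cons x t ih =>
    intro hs a h
    have hxt : ∀ b ∈ t, x > b := fun _ hb => List.rel_of_pairwise_cons hs hb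
    cases a with
    | zero =>
      have hnil : (x :: t).filter (fun y => decide ((x :: t).get ⟨0, h⟩ < y)) = [] := by
        rw [List.filter_eq_nil_iff]
        intro b hb
        simp only [List.get, decide_eq_true_eq, not_lt]
        rcases List.mem_cons.1 hb with rfl | hb
        · exact le_refl _
        · exact (hxt b hb).le
      rw [hnil]
      rfl
    | succ a =>
      have ha' : a < t.length := by simpa using h
      have hget : (x :: t).get ⟨a + 1, h⟩ = t.get ⟨a, ha'⟩ := rfl
      rw [List.filter_cons]
      rw [hget]
      have hgt : t.get ⟨a, ha'⟩ < x := hxt _ (t.get_mem ⟨a, ha'⟩)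
      rw [if_pos (by simpa using hgt)]
      rw [List.length_cons, ih hs.of_cons a ha']

lemma sorted_getD (s : Finset ℕ) (a : ℕ) (ha : a < s.card) :
    ((s.sort (· ≤ ·)).reverse.getD a 0 ∈ s) ∧
    (s.filter (fun x => (s.sort (· ≤ ·)).reverse.getD a 0 < x)).card = a := by
  set L := (s.sort (· ≤ ·)).reverse with hL
  have hlen : L.length = s.card := by
    rw [hL, List.length_reverse, Finset.length_sort]
  have ha' : a < L.length := by omega
  have hgetD : L.getD a 0 = L.get ⟨a, ha'⟩ := List.getD_eq_getElem L 0 ha'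
  have hmemL : ∀ x, x ∈ L → x ∈ s := by
    intro x hx
    rw [hL, List.mem_reverse, Finset.mem_sort] at hx
    exact hx
  have hmem : L.get ⟨a, ha'⟩ ∈ s := hmemL _ (List.get_mem L ⟨a, ha'⟩)
  have hsorted : L.Pairwise (· > ·) := by
    rw [hL]
    rw [List.pairwise_reverse]
    exact List.Pairwise.imp₂ (fun a b h1 h2 => lt_of_le_of_ne h1 h2) (Finset.pairwise_sort s (· ≤ ·)) (Finset.sort_nodup s (· ≤ ·))
  constructor
  · rw [hgetD]; exact hmem
  · have h5 := desc_count L hsorted a ha'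
    obtain ⟨cv, hcv⟩ : ∃ cv, L.get ⟨a, ha'⟩ = cv := ⟨_, rfl⟩
    rw [hcv] at h5
    rw [hgetD, hcv]
    have h1 : (s.filter (fun x => cv < x)).card
        = Multiset.card (Multiset.filter (fun x => cv < x) s.val) := by
      rw [Finset.card_def, Finset.filter_val]
    have h2 : s.val = ↑(s.sort (· ≤ ·)) := (Finset.sort_eq _ _).symm
    rw [h1, h2]
    have h3 : Multiset.filter (fun x => cv < x) ↑(s.sort (· ≤ ·))
        = ↑((s.sort (· ≤ ·)).filter (fun x => decide (cv < x))) := by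
      rfl
    rw [h3, Multiset.coe_card]
    have h4 : ((s.sort (· ≤ ·)).filter (fun x => decide (cv < x))).length
        = (L.filter (fun x => decide (cv < x))).length := by
      rw [hL, List.filter_reverse, List.length_reverse]
    rw [h4]
    exact h5

lemma adm_length {v : List ℕ} (hne : v ≠ []) :
    (admissible v).length = (Maxb v).card + (Maxa v).card + 1 := by
  rw [admissible, if_neg hne]
  simp [List.length_append]
  omega

lemma adm_cases {v : List ℕ} (hne : v ≠ []) {a : ℕ} (ha : a < (admissible v).length) :
    ((admissible v).getD a 0 ∈ Maxb v ∧
        ((Maxb v).filter (fun x => (admissible v).getD a 0 < x)).card = a) ∨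
    ((admissible v).getD a 0 ∈ Maxa v ∧
        ((Maxa v).filter (fun x => (admissible v).getD a 0 < x)).card + (Maxb v).card = a) ∨
    ((admissible v).getD a 0 = i0 v - 1 ∧ a = (Maxb v).card + (Maxa v).card) := by
  rw [adm_length hne] at ha
  have hB : ((Maxb v).sort (· ≤ ·)).reverse.length = (Maxb v).card := by
    rw [List.length_reverse, Finset.length_sort]
  have hA : ((Maxa v).sort (· ≤ ·)).reverse.length = (Maxa v).card := by
    rw [List.length_reverse, Finset.length_sort]
  rw [admissible, if_neg hne]
  rcases lt_or_ge a (Maxb v).card with h1 | h1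
  · left
    rw [List.append_assoc, List.getD_append _ _ _ _ (by omega)]
    exact sorted_getD (Maxb v) a h1
  rcases lt_or_ge a ((Maxb v).card + (Maxa v).card) with h2 | h2
  · right; left
    rw [List.append_assoc, List.getD_append_right _ _ _ _ (by omega),
      List.getD_append _ _ _ _ (by omega), hB]
    have := sorted_getD (Maxa v) (a - (Maxb v).card) (by omega)
    refine ⟨this.1, ?_⟩
    rw [this.2]
    omega
  · right; right
    have ha2 : a = (Maxb v).card + (Maxa v).card := by omega
    rw [List.append_assoc, List.getD_append_right _ _ _ _ (by omega),
      List.getD_append_right _ _ _ _ (by rw [hA]; omega), hB, hA]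
    refine ⟨?_, ha2⟩
    have : a - (Maxb v).card - (Maxa v).card = 0 := by omega
    rw [this]
    rfl

lemma adm_mem_le {v : List ℕ} (hv : IsAreaSeq v) (hne : v ≠ []) {a : ℕ}
    (ha : a < (admissible v).length) : (admissible v).getD a 0 ≤ v.length := by
  rcases adm_cases hne ha with ⟨h, _⟩ | ⟨h, _⟩ | ⟨h, _⟩
  · exact (mem_Maxb.1 h).1.2
  · exact (mem_Maxa.1 h).1.2
  · have := (mem_S0.1 (i0_mem_S0 (Maxb_nonempty hv hne))).1.2
    omega

lemma z_notmem_Maxb {v : List ℕ} (hv : IsAreaSeq v) (hne : v ≠ []) :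
    i0 v - 1 ∉ Maxb v := by
  intro h
  obtain ⟨⟨h1, h2⟩, h3⟩ := mem_Maxb.1 h
  obtain ⟨⟨hz1, hz2⟩, hgz, hz3⟩ := mem_S0.1 (i0_mem_S0 (Maxb_nonempty hv hne))
  rcases hz3 with hz3 | hz3
  · omega
  · exact hz3 h3

lemma z_notmem_Maxa {v : List ℕ} (hv : IsAreaSeq v) (hne : v ≠ []) :
    i0 v - 1 ∉ Maxa v := by
  intro h
  obtain ⟨⟨h1, h2⟩, h3, h4⟩ := mem_Maxa.1 h
  obtain ⟨⟨hz1, hz2⟩, hgz, hz3⟩ := mem_S0.1 (i0_mem_S0 (Maxb_nonempty hv hne))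
  have := h4 (i0 v) (by omega) hz2
  omega

lemma Maxb_disj_Maxa {v : List ℕ} {x : ℕ} (hb : x ∈ Maxb v) (haa : x ∈ Maxa v) : False := by
  obtain ⟨_, h1⟩ := mem_Maxb.1 hb
  obtain ⟨_, h2, _⟩ := mem_Maxa.1 haa
  omega

lemma adm_nodup {v : List ℕ} (hv : IsAreaSeq v) (hne : v ≠ []) :
    (admissible v).Nodup := by
  rw [admissible, if_neg hne]
  rw [List.append_assoc, List.nodup_append]
  refine ⟨by rw [List.nodup_reverse]; exact (Maxb v).sort_nodup _, ?_, ?_⟩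
  · rw [List.nodup_append]
    refine ⟨by rw [List.nodup_reverse]; exact (Maxa v).sort_nodup _, List.nodup_singleton _, ?_⟩
    intro x hx y hx' hxy
    subst hxy
    rw [List.mem_reverse, Finset.mem_sort] at hx
    rw [List.mem_singleton] at hx'
    subst hx'
    exact z_notmem_Maxa hv hne hx
  · intro x hx y hx' hxy
    subst hxy
    rw [List.mem_reverse, Finset.mem_sort] at hx
    rcases List.mem_append.1 hx' with h | h
    · rw [List.mem_reverse, Finset.mem_sort] at h
      exact Maxb_disj_Maxa hx h
    · rw [List.mem_singleton] at h
      subst h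
      exact z_notmem_Maxb hv hne hx

lemma eraseIdx_ins {v : List ℕ} {c : ℕ} (hc : c ≤ v.length) :
    (ins v c).eraseIdx c = v := by
  unfold ins
  rw [List.eraseIdx_append_of_length_le (by rw [List.length_take]; omega)]
  have : c - (v.take c).length = 0 := by rw [List.length_take]; omega
  rw [this, List.eraseIdx_cons_zero, List.take_append_drop]

lemma get1_single (i : ℕ) : get1 [0] i = 0 := by
  unfold get1
  cases (i - 1) with
  | zero => rfl
  | succ n => rfl

lemma maxVal_single : maxVal [0] = 0 := rfl

lemma Maxb_single : Maxb [0] = {1} := by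
  ext i
  rw [mem_Maxb, Finset.mem_singleton]
  constructor
  · rintro ⟨⟨h1, h2⟩, _⟩
    simp at h2
    omega
  · rintro rfl
    exact ⟨⟨le_refl _, by simp⟩, by rw [get1_single, maxVal_single]⟩

lemma Maxa_single : Maxa [0] = ∅ := by
  rw [Finset.eq_empty_iff_forall_notMem]
  intro i hi
  obtain ⟨_, h, _⟩ := mem_Maxa.1 hi
  rw [get1_single, maxVal_single] at h
  omega

lemma i0_single : i0 [0] = 1 := by
  apply i0_eq
  · rw [mem_S0]
    exact ⟨⟨le_refl _, by simp⟩, by rw [get1_single, maxVal_single], Or.inl rfl⟩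
  · intro j hj
    obtain ⟨⟨_, h⟩, _, _⟩ := mem_S0.1 hj
    simpa using h

lemma key_nil : IsAreaSeq (ins [] 0) ∧ (ins [] 0).length = 1 ∧
    i0 (ins [] 0) = 1 ∧ (admissible (ins [] 0)).length = 2 := by
  have h0 : ins [] 0 = [0] := rfl
  rw [h0]
  refine ⟨⟨fun _ => rfl, fun i h1 h2 => by simp at h2; omega⟩, rfl, i0_single, ?_⟩
  rw [adm_length (by simp), Maxb_single, Maxa_single]
  simp

lemma key {v : List ℕ} {a c : ℕ} (hv : IsAreaSeq v) (hne : v ≠ [])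
    (ha : a < (admissible v).length) (hc : (admissible v).getD a 0 = c) :
    i0 (ins v c) = c + 1 ∧ (admissible (ins v c)).length = a + 2 := by
  have hne' : ins v c ≠ [] := by
    have := length_ins v c (hc ▸ adm_mem_le hv hne ha)
    intro h
    rw [h] at this
    simp at this
  rcases adm_cases hne ha with ⟨h, hcnt⟩ | ⟨h, hcnt⟩ | ⟨h, hcnt⟩
  · rw [hc] at h hcnt
    obtain ⟨_, hMb, hMa, hi0⟩ := caseB hv h
    refine ⟨hi0, ?_⟩
    rw [adm_length hne', hMb, hMa, Finset.card_singleton,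
      Finset.card_image_of_injective _ (add_left_injective 1), hcnt]
    omega
  · rw [hc] at h hcnt
    obtain ⟨_, ⟨hnm, hMb⟩, hMa, hi0⟩ := caseA h
    refine ⟨hi0, ?_⟩
    rw [adm_length hne', hMb, hMa, Finset.card_insert_of_notMem hnm,
      Finset.card_image_of_injective _ (add_left_injective 1)]
    omega
  · rw [hc] at h
    obtain ⟨_, hMb, hMa, hi0, _⟩ := caseZ hv hne h
    refine ⟨hi0, ?_⟩
    rw [adm_length hne', hMb, hMa]
    omega

lemma get1_append_left {u t : List ℕ} {i : ℕ} (h1 : 1 ≤ i) (h2 : i ≤ u.length) :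
    get1 (u ++ t) i = get1 u i := by
  unfold get1
  rw [List.getD_append _ _ _ _ (by omega)]

lemma get1_snoc_last (u : List ℕ) (a : ℕ) : get1 (u ++ [a]) (u.length + 1) = a := by
  unfold get1
  rw [List.getD_append_right _ _ _ _ (by omega)]
  simp

lemma isAreaSeq_of_snoc {u : List ℕ} {a : ℕ} (h : IsAreaSeq (u ++ [a])) :
    IsAreaSeq u := by
  obtain ⟨h1, h2⟩ := h
  constructor
  · intro hne
    have hlen : 1 ≤ u.length := by
      rcases u with _ | ⟨x, t⟩
      · exact absurd rfl hne
      · simp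
    rw [← get1_append_left (le_refl 1) hlen]
    exact h1 (by simp)
  · intro i hi1 hi2
    rw [← get1_append_left hi1 (by omega), ← get1_append_left (by omega) (by omega)]
    exact h2 i hi1 (by simp; omega)

lemma snoc_le {u : List ℕ} {a : ℕ} (h : IsAreaSeq (u ++ [a])) (hne : u ≠ []) :
    a ≤ get1 u u.length + 1 := by
  have hlen : 1 ≤ u.length := by
    rcases u with _ | ⟨x, t⟩
    · exact absurd rfl hne
    · simp
  have := h.2 u.length hlen (by simp)
  rw [get1_snoc_last, get1_append_left hlen (le_refl _)] at this
  exact this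

lemma snoc_zero {a : ℕ} (h : IsAreaSeq ([] ++ [a])) : a = 0 := by
  have := h.1 (by simp)
  simpa [get1] using this

lemma psi_nil : psi [] = [] := rfl

lemma psi_snoc (u : List ℕ) (a : ℕ) :
    psi (u ++ [a]) = ins (psi u) ((admissible (psi u)).getD a 0) := by
  unfold psi
  rw [List.reverse_append]
  rfl

lemma adm_nil : admissible [] = [0] := rfl

lemma psi_spec : ∀ w : List ℕ, IsAreaSeq w →
    IsAreaSeq (psi w) ∧ (psi w).length = w.length ∧
    (admissible (psi w)).length = (if w = [] then 1 else get1 w w.length + 2) := by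
  intro w
  induction w using List.reverseRecOn with
  | nil =>
    intro _
    refine ⟨⟨fun h => absurd psi_nil h, fun i h1 h2 => ?_⟩, by rw [psi_nil], ?_⟩
    · rw [psi_nil] at h2; simp at h2
    · rw [psi_nil, if_pos rfl]; rfl
  | append_singleton u a IH =>
    intro hv
    have hu := isAreaSeq_of_snoc hv
    obtain ⟨hpu, hplen, hadm⟩ := IH hu
    have hwne : u ++ [a] ≠ [] := by simp
    have hwlen : (u ++ [a]).length = u.length + 1 := by simp
    have hlast : get1 (u ++ [a]) (u.length + 1) = a := get1_snoc_last u a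
    rcases eq_or_ne u [] with rfl | hune
    · have ha0 : a = 0 := snoc_zero hv
      subst ha0
      rw [psi_snoc, psi_nil, adm_nil]
      have hgetD : ([0] : List ℕ).getD 0 0 = 0 := rfl
      rw [hgetD]
      obtain ⟨k1, k2, _, k4⟩ := key_nil
      refine ⟨k1, by rw [k2]; simp, ?_⟩
      rw [if_neg (by simp), k4]
      simp [get1]
    · have hpune : psi u ≠ [] := by
        intro h
        apply hune
        have := hplen
        rw [h] at this
        simp at this
        exact List.length_eq_zero_iff.1 this.symm
      rw [if_neg hune] at hadm
      have hule : 1 ≤ u.length := by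
        rcases u with _ | _
        · exact absurd rfl hune
        · simp
      have hale : a ≤ get1 u u.length + 1 := snoc_le hv hune
      have ha : a < (admissible (psi u)).length := by rw [hadm]; omega
      rw [psi_snoc]
      set c := (admissible (psi u)).getD a 0 with hcdef
      have hcle : c ≤ (psi u).length := adm_mem_le hpu hpune ha
      obtain ⟨hi0, hadm'⟩ := key hpu hpune ha rfl
      refine ⟨isAreaSeq_ins hpu hcle, ?_, ?_⟩
      · rw [length_ins _ _ hcle, hplen, hwlen]
      · rw [if_neg hwne, hadm', hwlen, hlast]

lemma psi_inj : ∀ w : List ℕ, IsAreaSeq w → ∀ w' : List ℕ, IsAreaSeq w' →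
    w.length = w'.length → psi w = psi w' → w = w' := by
  intro w
  induction w using List.reverseRecOn with
  | nil =>
    intro _ w' _ hlen _
    simp at hlen
    exact (List.length_eq_zero_iff.1 hlen.symm).symm
  | append_singleton u a IH =>
    intro hv w' hv' hlen hpsi
    rcases List.eq_nil_or_concat' w' with rfl | ⟨u', a', rfl⟩
    · simp at hlen
    have hu := isAreaSeq_of_snoc hv
    have hu' := isAreaSeq_of_snoc hv'
    obtain ⟨hpu, hplen, hadm⟩ := psi_spec u hu
    obtain ⟨hpu', hplen', hadm'⟩ := psi_spec u' hu'
    have hulen : u.length = u'.length := by simp at hlen; omega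
    rcases eq_or_ne u [] with rfl | hune
    · have : u' = [] := by rw [← List.length_eq_zero_iff]; simpa using hulen.symm
      subst this
      rw [snoc_zero hv, snoc_zero hv']
    · have hune' : u' ≠ [] := by
        intro h
        rw [h] at hulen
        simp at hulen
        exact hune hulen
      have hpune : psi u ≠ [] := by
        intro h
        rw [h] at hplen
        simp at hplen
        exact hune (List.length_eq_zero_iff.1 hplen.symm)
      have hpune' : psi u' ≠ [] := by
        intro h
        rw [h] at hplen'
        simp at hplen'
        exact hune' (List.length_eq_zero_iff.1 hplen'.symm)
      rw [if_neg hune] at hadm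
      rw [if_neg hune'] at hadm'
      have ha : a < (admissible (psi u)).length := by
        have := snoc_le hv hune
        rw [hadm]; omega
      have ha' : a' < (admissible (psi u')).length := by
        have := snoc_le hv' hune'
        rw [hadm']; omega
      rw [psi_snoc, psi_snoc] at hpsi
      set c := (admissible (psi u)).getD a 0 with hcdef
      set c' := (admissible (psi u')).getD a' 0 with hcdef'
      have hcle : c ≤ (psi u).length := adm_mem_le hpu hpune ha
      have hcle' : c' ≤ (psi u').length := adm_mem_le hpu' hpune' ha'
      obtain ⟨hi0, _⟩ := key hpu hpune ha rfl
      obtain ⟨hi0', _⟩ := key hpu' hpune' ha' rfl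
      have hcc : c = c' := by
        have hio := congrArg i0 hpsi
        rw [hi0, hi0'] at hio
        omega
      have hvv : psi u = psi u' := by
        have h1 : (ins (psi u) c).eraseIdx c = psi u := eraseIdx_ins hcle
        have h2 : (ins (psi u') c').eraseIdx c' = psi u' := eraseIdx_ins hcle'
        rw [← h1, ← h2, hpsi, hcc]
      have huu : u = u' := IH hu u' hu' hulen hvv
      subst huu
      have haa : a = a' := by
        have hnd := adm_nodup hpu hpune
        have e1 : (admissible (psi u)).getD a 0 = (admissible (psi u)).get ⟨a, ha⟩ :=
          List.getD_eq_getElem _ _ ha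
        have e2 : (admissible (psi u)).getD a' 0 = (admissible (psi u)).get ⟨a', ha'⟩ :=
          List.getD_eq_getElem _ _ ha'
        have hge : (admissible (psi u)).get ⟨a, ha⟩ = (admissible (psi u)).get ⟨a', ha'⟩ := by
          rw [← e1, ← e2, ← hcdef, ← hcdef', hcc]
        have := (List.Nodup.get_inj_iff hnd).1 hge
        exact Fin.mk.inj_iff.1 this
      rw [haa]

lemma get1_le_idx {w : List ℕ} (hw : IsAreaSeq w) :
    ∀ i, 1 ≤ i → i ≤ w.length → get1 w i ≤ i - 1 := by
  intro i
  induction i with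
  | zero => intro h _; omega
  | succ n IH =>
    intro h1 h2
    rcases Nat.eq_zero_or_pos n with rfl | hn
    · have hne : w ≠ [] := by
        intro h
        rw [h] at h2
        simp at h2
      rw [hw.1 hne]
    · have hs := hw.2 n hn (by omega)
      have := IH (by omega) (by omega)
      omega

lemma mem_lt_length {w : List ℕ} (hw : IsAreaSeq w) {x : ℕ} (hx : x ∈ w) :
    x < w.length := by
  rw [mem_iff_get1] at hx
  obtain ⟨i, ⟨h1, h2⟩, rfl⟩ := hx
  have := get1_le_idx hw i h1 h2
  omega

lemma finite_area (n : ℕ) : {w : List ℕ | IsAreaSeq w ∧ w.length = n}.Finite := by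
  apply Set.Finite.subset
    (Set.Finite.image (List.map (Fin.val (n := n+1)))
      (List.finite_length_eq (Fin (n+1)) n))
  rintro w ⟨hw, hlen⟩
  refine ⟨w.attach.map (fun x => ⟨x.1, ?_⟩), ?_, ?_⟩
  · have := mem_lt_length hw x.2
    omega
  · simp only [Set.mem_setOf_eq, List.length_map, List.length_attach]
    exact hlen
  · rw [List.map_map]
    have : (Fin.val (n := n+1)) ∘ (fun x : {y // y ∈ w} => (⟨x.1, by
        have := mem_lt_length hw x.2; omega⟩ : Fin (n+1))) = fun x => x.1 := rfl
    rw [this]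
    simp


/-- The bounce sequence: `b_1 = 0`, and `b_i = b_{i-1} + 1` if
`b_{i-1} + 1 ≤ w_i`, otherwise `b_i = 0`. -/
def bseq (w : List ℕ) : ℕ → ℕ
  | 0 => 0
  | 1 => 0
  | (i + 2) => if bseq w (i + 1) + 1 ≤ get1 w (i + 2) then bseq w (i + 1) + 1 else 0

/-- The bounces of `w`: positions `1 < i ≤ n` with `b_i = 0`. -/
def bounces (w : List ℕ) : Finset ℕ :=
  (Finset.Icc 2 w.length).filter (fun i => bseq w i = 0)

/-- The bounce statistic: the sum of the reversed positions `n - i + 1` of the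
bounces of `w`. -/
def bounce (w : List ℕ) : ℕ := ∑ i ∈ bounces w, (w.length - i + 1)

/-- The map `ψ` restricts to a bijection from the set of area sequences of
size `n` onto itself. -/
theorem psi_bijOn (n : ℕ) :
    Set.BijOn psi {w : List ℕ | IsAreaSeq w ∧ w.length = n}
      {w : List ℕ | IsAreaSeq w ∧ w.length = n} := by
  have hmaps : Set.MapsTo psi {w : List ℕ | IsAreaSeq w ∧ w.length = n}
      {w : List ℕ | IsAreaSeq w ∧ w.length = n} := by
    rintro w ⟨hw, hlen⟩
    obtain ⟨h1, h2, _⟩ := psi_spec w hw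
    exact ⟨h1, by rw [h2, hlen]⟩
  have hinj : Set.InjOn psi {w : List ℕ | IsAreaSeq w ∧ w.length = n} := by
    rintro w ⟨hw, hlen⟩ w' ⟨hw', hlen'⟩ h
    exact psi_inj w hw w' hw' (hlen.trans hlen'.symm) h
  exact ((finite_area n).injOn_iff_bijOn_of_mapsTo hmaps).1 hinj
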